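/- For every r-tuple F = (F_1,…,F_r) of formal power series in R[[x_1,…,x_r]] there exists a unique r-tuple Φ = (Φ_1,…,Φ_r) of elements of A satisfying the functional equation Φ_m = F_m(X + SΦ) for all m, where X + SΦ denotes the r-tuple (x_i + Σ_{j=1}^r s_{ij}Φ_j)_{i=1,…,r}. -/

import Mathlib

/-- Index type for the variables `s_{ij}`, `1 ≤ i ≤ j ≤ r`. -/
def SVar (r : ℕ) := {p : Fin r × Fin r // p.1 ≤ p.2}

instance {r : ℕ} : DecidableEq (SVar r) :=
  inferInstanceAs (DecidableEq {p : Fin r × Fin r // p.1 ≤ p.2})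

instance {r : ℕ} : Fintype (SVar r) :=
  inferInstanceAs (Fintype {p : Fin r × Fin r // p.1 ≤ p.2})

/-- The index of the variable `s_{ij} = s_{ji}` for arbitrary `i j`. -/
def sIdx {r : ℕ} (i j : Fin r) : SVar r :=
  if h : i ≤ j then ⟨(i, j), h⟩ else ⟨(j, i), (le_total i j).resolve_left h⟩

/-- Formal partial derivative `∂f/∂x_i` of a multivariate formal power series:
the coefficient of `∂f/∂x_i` at a monomial `m` is `(m i + 1) · (coeff of f at m + {i})`. -/
noncomputable def pd {σ : Type*} (R : Type*) [CommSemiring R]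
    (i : σ) (f : MvPowerSeries σ R) : MvPowerSeries σ R :=
  fun m => (((m i) + 1 : ℕ) : R) * MvPowerSeries.coeff (R := R) (m + Finsupp.single i 1) f

/-- Substitution of `s_{ij} = 0` for all `i ≤ j`: restriction to the `x`-variables. -/
noncomputable def resS0 {r : ℕ} {R : Type*} [CommSemiring R]
    (f : MvPowerSeries (Fin r ⊕ SVar r) R) : MvPowerSeries (Fin r) R :=
  fun m => MvPowerSeries.coeff (R := R) (Finsupp.mapDomain Sum.inl m) f

/-- Total degree of a monomial. -/
def mdeg {σ : Type*} (m : σ →₀ ℕ) : ℕ := m.sum fun _ e => e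

/-- Formal substitution `F(G) = Σ_m (coeff_m F) · ∏_i G_i^{m_i}`, for tuples `G` whose
components have zero constant coefficient, computed coefficientwise: since
`∏ G_i^{m_i}` has order `≥ |m|`, only multi-indices `m` with `|m| ≤ deg μ` (in
particular `m ≤ (deg μ, …, deg μ)`) contribute to the coefficient at `μ`. -/
noncomputable def substT {σ τ R : Type*} [Fintype σ] [DecidableEq σ] [CommRing R]
    (F : MvPowerSeries σ R) (G : σ → MvPowerSeries τ R) : MvPowerSeries τ R :=
  fun μ => MvPowerSeries.coeff (R := R) μ
    (∑ m ∈ Finset.Iic (Finsupp.equivFunOnFinite.symm (fun _ : σ => mdeg μ)),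
      MvPowerSeries.coeff (R := R) m F • ∏ i, (G i) ^ (m i))

section AE

variable {σ R : Type*} [CommRing R]

lemma mdeg_add {σ : Type*} (a b : σ →₀ ℕ) : mdeg (a + b) = mdeg a + mdeg b :=
  Finsupp.sum_add_index' (fun _ => rfl) (fun _ _ _ => rfl)

/-- `f` and `g` agree on all coefficients of total degree `< n`. -/
def AE (n : ℕ) (f g : MvPowerSeries σ R) : Prop :=
  ∀ μ : σ →₀ ℕ, mdeg μ < n → MvPowerSeries.coeff (R := R) μ f = MvPowerSeries.coeff (R := R) μ g

lemma AE.refl {n : ℕ} (f : MvPowerSeries σ R) : AE n f f := fun _ _ => rfl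

lemma AE.trans {n : ℕ} {f g h : MvPowerSeries σ R} (h1 : AE n f g) (h2 : AE n g h) :
    AE n f h := fun μ hμ => (h1 μ hμ).trans (h2 μ hμ)

lemma AE.mono {m n : ℕ} (hmn : m ≤ n) {f g : MvPowerSeries σ R} (h : AE n f g) :
    AE m f g := fun μ hμ => h μ (lt_of_lt_of_le hμ hmn)

lemma AE.add {n : ℕ} {f f' g g' : MvPowerSeries σ R} (hf : AE n f f') (hg : AE n g g') :
    AE n (f + g) (f' + g') := fun μ hμ => by
  simp [map_add, hf μ hμ, hg μ hμ]

lemma AE.smul {n : ℕ} (c : R) {f g : MvPowerSeries σ R} (hf : AE n f g) :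
    AE n (c • f) (c • g) := fun μ hμ => by
  simp [MvPowerSeries.coeff_smul, hf μ hμ]

lemma AE.mul {n : ℕ} {f f' g g' : MvPowerSeries σ R} (hf : AE n f f') (hg : AE n g g') :
    AE n (f * g) (f' * g') := by
  classical
  intro μ hμ
  rw [MvPowerSeries.coeff_mul, MvPowerSeries.coeff_mul]
  refine Finset.sum_congr rfl fun p hp => ?_
  have hsum : p.1 + p.2 = μ := Finset.HasAntidiagonal.mem_antidiagonal.mp hp
  have h1 : mdeg p.1 < n := by
    have : mdeg p.1 ≤ mdeg μ := by rw [← hsum, mdeg_add]; omega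
    omega
  have h2 : mdeg p.2 < n := by
    have : mdeg p.2 ≤ mdeg μ := by rw [← hsum, mdeg_add]; omega
    omega
  rw [hf _ h1, hg _ h2]

lemma AE.pow {n : ℕ} {f g : MvPowerSeries σ R} (hf : AE n f g) (k : ℕ) :
    AE n (f ^ k) (g ^ k) := by
  induction k with
  | zero => simpa using AE.refl _
  | succ k ih => rw [pow_succ, pow_succ]; exact ih.mul hf

lemma AE.prod {n : ℕ} {ι : Type*} (s : Finset ι) {f g : ι → MvPowerSeries σ R}
    (h : ∀ i ∈ s, AE n (f i) (g i)) : AE n (∏ i ∈ s, f i) (∏ i ∈ s, g i) := by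
  classical
  induction s using Finset.induction with
  | empty => simpa using AE.refl _
  | insert _ _ hx ih =>
    rw [Finset.prod_insert hx, Finset.prod_insert hx]
    exact (h _ (Finset.mem_insert_self _ _)).mul
      (ih fun i hi => h i (Finset.mem_insert_of_mem hi))

lemma AE.sum {n : ℕ} {ι : Type*} (s : Finset ι) {f g : ι → MvPowerSeries σ R}
    (h : ∀ i ∈ s, AE n (f i) (g i)) : AE n (∑ i ∈ s, f i) (∑ i ∈ s, g i) := fun μ hμ => by
  rw [map_sum, map_sum]
  exact Finset.sum_congr rfl fun i hi => h i hi μ hμ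

lemma mdeg_single {σ : Type*} (s : σ) : mdeg (Finsupp.single s (1:ℕ)) = 1 := by
  simp [mdeg, Finsupp.sum_single_index]

lemma AE.X_mul {n : ℕ} (s : σ) {f g : MvPowerSeries σ R} (hf : AE n f g) :
    AE (n + 1) (MvPowerSeries.X s * f) (MvPowerSeries.X s * g) := by
  intro μ hμ
  rw [show (MvPowerSeries.X s : MvPowerSeries σ R)
      = MvPowerSeries.monomial (R := R) (Finsupp.single s 1) 1 from rfl,
    MvPowerSeries.coeff_monomial_mul, MvPowerSeries.coeff_monomial_mul]
  split_ifs with h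
  · have heq : (μ - Finsupp.single s 1) + Finsupp.single s 1 = μ := tsub_add_cancel_of_le h
    have h2 : mdeg (μ - Finsupp.single s 1) + mdeg (Finsupp.single s (1:ℕ)) = mdeg μ := by
      rw [← mdeg_add, heq]
    rw [mdeg_single] at h2
    rw [hf _ (by omega)]
  · rfl

end AE

section Main

variable {r : ℕ} {R : Type*} [CommRing R]

/-- The tuple `X + SΦ`. -/
noncomputable def Gt (Φ : Fin r → MvPowerSeries (Fin r ⊕ SVar r) R) (i : Fin r) :
    MvPowerSeries (Fin r ⊕ SVar r) R :=
  MvPowerSeries.X (Sum.inl i) + ∑ j, MvPowerSeries.X (Sum.inr (sIdx i j)) * Φ j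

/-- One step of the fixed-point iteration. -/
noncomputable def Tmap (F : Fin r → MvPowerSeries (Fin r) R)
    (Φ : Fin r → MvPowerSeries (Fin r ⊕ SVar r) R) (m : Fin r) :
    MvPowerSeries (Fin r ⊕ SVar r) R :=
  substT (F m) (Gt Φ)

lemma key (F : Fin r → MvPowerSeries (Fin r) R) {n : ℕ}
    {Φ Ψ : Fin r → MvPowerSeries (Fin r ⊕ SVar r) R}
    (h : ∀ j, AE n (Φ j) (Ψ j)) (m : Fin r) :
    AE (n + 1) (Tmap F Φ m) (Tmap F Ψ m) := by
  intro μ hμ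
  have hG : ∀ i, AE (n + 1) (Gt Φ i) (Gt Ψ i) := fun i =>
    (AE.refl _).add (AE.sum Finset.univ fun j _ => AE.X_mul _ (h j))
  have hs := AE.sum (Finset.Iic (Finsupp.equivFunOnFinite.symm (fun _ : Fin r => mdeg μ)))
    (f := fun m' => MvPowerSeries.coeff (R := R) m' (F m) • ∏ i, (Gt Φ i) ^ (m' i))
    (g := fun m' => MvPowerSeries.coeff (R := R) m' (F m) • ∏ i, (Gt Ψ i) ^ (m' i))
    (fun m' _ => AE.smul _ (AE.prod _ fun i _ => (hG i).pow _))
  exact hs μ hμ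

noncomputable def seqF (F : Fin r → MvPowerSeries (Fin r) R) :
    ℕ → (Fin r → MvPowerSeries (Fin r ⊕ SVar r) R)
  | 0 => 0
  | (k + 1) => Tmap F (seqF F k)

lemma seq_stab (F : Fin r → MvPowerSeries (Fin r) R) :
    ∀ k j, AE k (seqF F k j) (seqF F (k + 1) j) := by
  intro k
  induction k with
  | zero => exact fun j μ h => absurd h (Nat.not_lt_zero _)
  | succ k ih => exact fun j => key F ih j

lemma seq_stab' (F : Fin r → MvPowerSeries (Fin r) R) {k l : ℕ} (h : k ≤ l) (j : Fin r) :
    AE k (seqF F k j) (seqF F l j) := by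
  induction l with
  | zero => obtain rfl : k = 0 := Nat.le_zero.mp h; exact AE.refl _
  | succ l ih =>
    rcases Nat.lt_or_ge l k with hk | hk
    · obtain rfl : k = l + 1 := by omega
      exact AE.refl _
    · exact (ih hk).trans ((seq_stab F l j).mono hk)


/-- The limit of the iteration. -/
noncomputable def ΦF (F : Fin r → MvPowerSeries (Fin r) R) (m : Fin r) :
    MvPowerSeries (Fin r ⊕ SVar r) R :=
  fun μ => seqF F (mdeg μ + 1) m μ

lemma coeff_ΦF (F : Fin r → MvPowerSeries (Fin r) R) (m : Fin r) (μ : Fin r ⊕ SVar r →₀ ℕ) :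
    MvPowerSeries.coeff (R := R) μ (ΦF F m) = MvPowerSeries.coeff (R := R) μ (seqF F (mdeg μ + 1) m) := by
  rw [MvPowerSeries.coeff_apply, MvPowerSeries.coeff_apply]
  rfl

lemma ΦF_agree (F : Fin r → MvPowerSeries (Fin r) R) (k : ℕ) (j : Fin r) :
    AE k (ΦF F j) (seqF F k j) := by
  intro μ hμ
  rw [coeff_ΦF]
  exact seq_stab' F (by omega) j μ (by omega)

lemma ΦF_fixed (F : Fin r → MvPowerSeries (Fin r) R) (m : Fin r) :
    ΦF F m = Tmap F (ΦF F) m := by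
  apply MvPowerSeries.ext
  intro μ
  rw [coeff_ΦF]
  have h2 : AE (mdeg μ + 1) (Tmap F (seqF F (mdeg μ)) m) (Tmap F (ΦF F) m) :=
    key F (fun j μ' hμ' => ((ΦF_agree F (mdeg μ) j) μ' hμ').symm) m
  have h3 : seqF F (mdeg μ + 1) m = Tmap F (seqF F (mdeg μ)) m := by simp only [seqF]
  rw [h3]
  exact h2 μ (by omega)

lemma uniqT (F : Fin r → MvPowerSeries (Fin r) R)
    {Φ Ψ : Fin r → MvPowerSeries (Fin r ⊕ SVar r) R}
    (hΦ : ∀ m, Φ m = Tmap F Φ m) (hΨ : ∀ m, Ψ m = Tmap F Ψ m) : Φ = Ψ := by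
  have main : ∀ n j, AE n (Φ j) (Ψ j) := by
    intro n
    induction n using Nat.strong_induction_on with
    | _ n ih =>
      intro j μ hμ
      have h2 := key F (fun j' => ih (mdeg μ) hμ j') j
      rw [hΦ j, hΨ j]
      exact h2 μ (by omega)
  funext j
  exact MvPowerSeries.ext fun μ => main (mdeg μ + 1) j μ (by omega)

end Main


/-- For every `r`-tuple `F` of power series in `R[[x_1,…,x_r]]` there is
a unique `r`-tuple `Φ` of elements of `A` with `Φ_m = F_m(X + SΦ)` for all `m`. -/
theorem stmt5 {r : ℕ} (hr : 1 ≤ r) (R : Type*) [CommRing R] [Algebra ℚ R]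
    (F : Fin r → MvPowerSeries (Fin r) R) :
    ∃! Φ : Fin r → MvPowerSeries (Fin r ⊕ SVar r) R,
      ∀ m, Φ m = substT (F m)
        (fun i => MvPowerSeries.X (Sum.inl i) +
          ∑ j, MvPowerSeries.X (Sum.inr (sIdx i j)) * Φ j) := by
  refine ⟨ΦF F, fun m => ?_, fun Ψ hΨ => ?_⟩
  · rw [ΦF_fixed F m]
    rfl
  · exact uniqT F (fun m => hΨ m) (fun m => ΦF_fixed F m)
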